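/- Let H ∈ {0,1}^{p×q} and let S be a set of s column indices of H. There exist an enumeration i_1, …, i_s of S and distinct row indices j_1, …, j_s such that H_{j_k, i_k} = 1 and H_{j_k, i_l} = 0 for all l > k (i.e., the submatrix of H on columns S can be brought to lower-triangular form with nonzero diagonal by row and column permutations) if and only if S contains no nonempty stopping set of H. -/
import Mathlib


/-- Support of row `j` of a binary matrix `H`. -/
def supp {p q : ℕ} (H : Fin p → Fin q → Bool) (j : Fin p) : Finset (Fin q) :=
  Finset.univ.filter (fun i => H j i)

/-- A set `S` of column indices is a stopping set of `H` if no row of `H` has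
exactly one nonzero entry in the columns indexed by `S`. -/
def IsStoppingSet {p q : ℕ} (H : Fin p → Fin q → Bool)
    (S : Finset (Fin q)) : Prop :=
  ∀ j : Fin p, (supp H j ∩ S).card ≠ 1

lemma aux_build {p q : ℕ} (H : Fin p → Fin q → Bool) :
    ∀ n (S : Finset (Fin q)), S.card = n →
    (∀ T ⊆ S, T.Nonempty → ∃ j, (supp H j ∩ T).card = 1) →
    ∃ (e : Fin n → Fin q) (r : Fin n → Fin p),
      Function.Injective e ∧ (∀ k, e k ∈ S) ∧ Function.Injective r ∧
      (∀ k, H (r k) (e k) = true) ∧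
      (∀ k l, k < l → H (r k) (e l) = false) := by
  intro n
  induction n with
  | zero =>
    intro S _ _
    exact ⟨Fin.elim0, Fin.elim0, fun k => k.elim0, fun k => k.elim0,
      fun k => k.elim0, fun k => k.elim0, fun k => k.elim0⟩
  | succ n ih =>
    intro S hcard hyp
    have hS : S.Nonempty := Finset.card_pos.mp (by omega)
    obtain ⟨j, hj⟩ := hyp S le_rfl hS
    obtain ⟨i, hi⟩ := Finset.card_eq_one.mp hj
    have himem : i ∈ supp H j ∩ S := by rw [hi]; exact Finset.mem_singleton_self i
    have hiS : i ∈ S := (Finset.mem_inter.mp himem).2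
    have hHji : H j i = true := by
      have := (Finset.mem_inter.mp himem).1
      simpa [supp] using this
    have hjother : ∀ c ∈ S, H j c = true → c = i := by
      intro c hc hH
      have : c ∈ supp H j ∩ S := Finset.mem_inter.mpr ⟨by simpa [supp] using hH, hc⟩
      rw [hi] at this
      simpa using this
    set S' := S.erase i with hS'
    have hcard' : S'.card = n := by
      rw [hS', Finset.card_erase_of_mem hiS, hcard]
      omega
    have hyp' : ∀ T ⊆ S', T.Nonempty → ∃ j, (supp H j ∩ T).card = 1 := by
      intro T hT hTne
      exact hyp T (hT.trans (Finset.erase_subset _ _)) hTne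
    obtain ⟨e', r', he'inj, he'S, hr'inj, htt, htr⟩ := ih S' hcard' hyp'
    have hjne : ∀ k, j ≠ r' k := by
      intro k hjk
      have h1 : H j (e' k) = true := by rw [hjk]; exact htt k
      have h2 : e' k ∈ S' := he'S k
      have := hjother (e' k) (Finset.mem_of_mem_erase h2) h1
      exact (Finset.ne_of_mem_erase h2) this
    refine ⟨Fin.cons i e', Fin.cons j r', ?_, ?_, ?_, ?_, ?_⟩
    · rw [Fin.cons_injective_iff]
      refine ⟨?_, he'inj⟩
      rintro ⟨k, hk⟩
      have := he'S k
      rw [hk] at this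
      exact Finset.notMem_erase i S this
    · intro k
      refine Fin.cases ?_ ?_ k
      · simpa using hiS
      · intro k'
        simpa using Finset.mem_of_mem_erase (he'S k')
    · rw [Fin.cons_injective_iff]
      refine ⟨?_, hr'inj⟩
      rintro ⟨k, hk⟩
      exact hjne k hk.symm
    · intro k
      refine Fin.cases ?_ ?_ k
      · simpa using hHji
      · intro k'
        simpa using htt k'
    · intro k l hkl
      rcases Fin.eq_zero_or_eq_succ l with rfl | ⟨l', rfl⟩
      · exact absurd hkl (by simp [Fin.lt_def])
      rcases Fin.eq_zero_or_eq_succ k with rfl | ⟨k', rfl⟩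
      · simp only [Fin.cons_zero, Fin.cons_succ]
        by_contra hne
        have h1 : H j (e' l') = true := by
          cases h : H j (e' l') with
          | false => exact absurd h hne
          | true => rfl
        have h2 := he'S l'
        exact (Finset.ne_of_mem_erase h2) (hjother (e' l') (Finset.mem_of_mem_erase h2) h1)
      · simp only [Fin.cons_succ]
        exact htr k' l' (Fin.succ_lt_succ_iff.mp hkl)

/-- the submatrix of `H` on the columns in `S` can be brought
into lower-triangular form with nonzero diagonal by row and column
permutations (there is an enumeration `i_1, …, i_s` of `S` and distinct rows
`j_1, …, j_s` with `H_{j_k, i_k} = 1` and `H_{j_k, i_l} = 0` for `l > k`) iff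
`S` contains no nonempty stopping set of `H`. -/
theorem stmt_16 (p q : ℕ) (H : Fin p → Fin q → Bool) (S : Finset (Fin q)) :
    (∃ (e : Fin S.card → Fin q) (r : Fin S.card → Fin p),
      Function.Injective e ∧ (∀ k, e k ∈ S) ∧ Function.Injective r ∧
      (∀ k, H (r k) (e k) = true) ∧
      (∀ k l, k < l → H (r k) (e l) = false)) ↔
    ∀ T ⊆ S, T.Nonempty → ¬ IsStoppingSet H T := by
  constructor
  · rintro ⟨e, r, heinj, heS, hrinj, htt, htr⟩ T hTS hTne hstop
    -- S is the image of e
    have himg : Finset.image e Finset.univ = S := by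
      apply Finset.eq_of_subset_of_card_le
      · intro x hx
        obtain ⟨k, _, hk⟩ := Finset.mem_image.mp hx
        exact hk ▸ heS k
      · rw [Finset.card_image_of_injective _ heinj, Finset.card_univ, Fintype.card_fin]
    -- the set of indices hitting T
    obtain ⟨t, ht⟩ := hTne
    have htS : t ∈ S := hTS ht
    rw [← himg] at htS
    obtain ⟨k₁, _, hk₁⟩ := Finset.mem_image.mp htS
    set K : Finset (Fin S.card) := Finset.univ.filter (fun k => e k ∈ T) with hK
    have hKne : K.Nonempty := ⟨k₁, by simp [hK, hk₁, ht]⟩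
    obtain ⟨k₀, hk₀K, hk₀min⟩ := K.exists_min_image id hKne
    have hek₀T : e k₀ ∈ T := by simpa [hK] using hk₀K
    have : supp H (r k₀) ∩ T = {e k₀} := by
      apply Finset.eq_singleton_iff_unique_mem.mpr
      constructor
      · exact Finset.mem_inter.mpr ⟨by simpa [supp] using htt k₀, hek₀T⟩
      · intro c hc
        obtain ⟨hc1, hc2⟩ := Finset.mem_inter.mp hc
        have hcS : c ∈ S := hTS hc2
        rw [← himg] at hcS
        obtain ⟨l, _, hl⟩ := Finset.mem_image.mp hcS
        subst hl
        rcases lt_trichotomy k₀ l with h | h | h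
        · have := htr k₀ l h
          simp [supp, this] at hc1
        · rw [h]
        · have hlK : l ∈ K := by simp [hK, hc2]
          exact absurd (hk₀min l hlK) (not_le.mpr h)
    exact hstop (r k₀) (by rw [this]; simp)
  · intro hyp
    apply aux_build H S.card S rfl
    intro T hTS hTne
    have := hyp T hTS hTne
    unfold IsStoppingSet at this
    push_neg at this
    exact this
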